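/- The Toda exchange r-matrices are (constant spectral parameter) solutions of the generalized classical Yang–Baxter equation: for each choice of sign, setting r_{12} = r_{13} = r_{23} equal to r^±(x) placed in the corresponding pair of factors of (ℂ^N)^{⊗3}, one has, for every x ∈ ℂ^N with x_{ij} ∉ iπℤ (i≠j), [r_{12},r_{13}] + [r_{12},r_{23}] + [r_{13},r_{23}] − Σ_{ν=1}^N (e_{νν}⊗Id⊗Id)·∂_{x_ν} r_{23} + Σ_{ν=1}^N (Id⊗e_{νν}⊗Id)·∂_{x_ν} r_{13} − Σ_{ν=1}^N (Id⊗Id⊗e_{νν})·∂_{x_ν} r_{12} = 0. -/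

import Mathlib

/- STATEMENT 6: The Toda exchange r-matrices r^±(x) are (constant spectral
   parameter) solutions of the generalized classical Yang–Baxter equation. -/

noncomputable section
open Matrix Complex
open scoped Kronecker BigOperators

def coth (z : ℂ) : ℂ := Complex.cosh z / Complex.sinh z

def inPiZ (z : ℂ) : Prop := ∃ n : ℤ, z = (n : ℂ) * (Real.pi : ℂ) * Complex.I

variable (N : ℕ)

def E (i j : Fin N) : Matrix (Fin N) (Fin N) ℂ := Matrix.single i j 1

def flipP : Matrix (Fin N × Fin N) (Fin N × Fin N) ℂ :=
  ∑ i : Fin N, ∑ j : Fin N, E N i j ⊗ₖ E N j i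

/-- the Toda exchange r-matrices r^±(x), ε = ±1 encoding the sign -/
def rToda (ε : ℂ) (x : Fin N → ℂ) : Matrix (Fin N × Fin N) (Fin N × Fin N) ℂ :=
  ε • flipP N -
    ∑ i : Fin N, ∑ j : Fin N,
      if i ≠ j then coth (x i - x j) • (E N i j ⊗ₖ E N j i) else 0

def pl12 (A : Matrix (Fin N × Fin N) (Fin N × Fin N) ℂ) :
    Matrix (Fin N × Fin N × Fin N) (Fin N × Fin N × Fin N) ℂ :=
  fun p q => A (p.1, p.2.1) (q.1, q.2.1) * (if p.2.2 = q.2.2 then 1 else 0)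

def pl13 (A : Matrix (Fin N × Fin N) (Fin N × Fin N) ℂ) :
    Matrix (Fin N × Fin N × Fin N) (Fin N × Fin N × Fin N) ℂ :=
  fun p q => A (p.1, p.2.2) (q.1, q.2.2) * (if p.2.1 = q.2.1 then 1 else 0)

def pl23 (A : Matrix (Fin N × Fin N) (Fin N × Fin N) ℂ) :
    Matrix (Fin N × Fin N × Fin N) (Fin N × Fin N × Fin N) ℂ :=
  fun p q => A (p.2.1, p.2.2) (q.2.1, q.2.2) * (if p.1 = q.1 then 1 else 0)

def pl1 (h : Matrix (Fin N) (Fin N) ℂ) :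
    Matrix (Fin N × Fin N × Fin N) (Fin N × Fin N × Fin N) ℂ :=
  fun p q => h p.1 q.1 * (if p.2.1 = q.2.1 then 1 else 0) * (if p.2.2 = q.2.2 then 1 else 0)

def pl2 (h : Matrix (Fin N) (Fin N) ℂ) :
    Matrix (Fin N × Fin N × Fin N) (Fin N × Fin N × Fin N) ℂ :=
  fun p q => h p.2.1 q.2.1 * (if p.1 = q.1 then 1 else 0) * (if p.2.2 = q.2.2 then 1 else 0)

def pl3 (h : Matrix (Fin N) (Fin N) ℂ) :
    Matrix (Fin N × Fin N × Fin N) (Fin N × Fin N × Fin N) ℂ :=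
  fun p q => h p.2.2 q.2.2 * (if p.1 = q.1 then 1 else 0) * (if p.2.1 = q.2.1 then 1 else 0)

def pderivMat {α : Type} (ν : Fin N)
    (f : (Fin N → ℂ) → Matrix α α ℂ) (x : Fin N → ℂ) : Matrix α α ℂ :=
  fun p q => deriv (fun t : ℂ => f (Function.update x ν t) p q) (x ν)

def mcomm {α : Type} [Fintype α] [DecidableEq α] (A B : Matrix α α ℂ) : Matrix α α ℂ :=
  A * B - B * A

/-! ### Auxiliary material -/

lemma sinh_ne_zero_of_not_inPiZ {z : ℂ} (h : ¬ inPiZ z) : Complex.sinh z ≠ 0 := by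
  intro h0
  apply h
  have hs : Complex.sin (z * Complex.I) = 0 := by
    rw [Complex.sin_mul_I, h0, zero_mul]
  obtain ⟨k, hk⟩ := Complex.sin_eq_zero_iff.mp hs
  exact ⟨-k, by push_cast; linear_combination (-Complex.I) * hk + z * Complex.I_sq⟩

lemma coth_neg' (z : ℂ) : coth (-z) = - coth z := by
  unfold coth; rw [Complex.sinh_neg, Complex.cosh_neg, div_neg]

lemma hasDerivAt_coth {z : ℂ} (h : Complex.sinh z ≠ 0) :
    HasDerivAt coth (1 - coth z ^ 2) z := by
  have h1 : HasDerivAt coth ((sinh z * sinh z - cosh z * cosh z) / sinh z ^ 2) z := (Complex.hasDerivAt_cosh z).div (Complex.hasDerivAt_sinh z) h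
  convert h1 using 1
  unfold coth
  field_simp

lemma coth_add_identity {u v : ℂ} (hu : Complex.sinh u ≠ 0) (hv : Complex.sinh v ≠ 0)
    (huv : Complex.sinh (u + v) ≠ 0) :
    coth u * coth v + 1 = coth (u + v) * (coth u + coth v) := by
  unfold coth
  rw [Complex.sinh_add, Complex.cosh_add] at *
  field_simp
  ring

def Fent (ε : ℂ) (x : Fin N → ℂ) (a b : Fin N) : ℂ :=
  ε - if a ≠ b then coth (x a - x b) else 0

def Gent (x : Fin N → ℂ) (ν a b : Fin N) : ℂ :=
  if a = b then 0 else
    ((if a = ν then 1 else 0) - (if b = ν then 1 else 0)) * (coth (x a - x b) ^ 2 - 1)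

lemma rToda_apply (ε : ℂ) (x : Fin N → ℂ) (a b c d : Fin N) :
    rToda N ε x (a, b) (c, d) = if b = c ∧ a = d then Fent N ε x a b else 0 := by
  simp only [rToda, Matrix.sub_apply, Matrix.smul_apply, flipP, Matrix.sum_apply,
    Matrix.kroneckerMap_apply, E, Matrix.single, Matrix.of_apply, Fent]
  simp [Finset.sum_ite_eq, ite_and,
    apply_ite (fun M : Matrix (Fin N × Fin N) (Fin N × Fin N) ℂ => M (a,b) (c,d)),
    mul_ite, ite_mul]
  rw [Finset.sum_eq_single a (fun i _ hi => by
        refine Finset.sum_eq_zero (fun j _ => ?_); split_ifs <;> simp_all)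
      (fun h => absurd (Finset.mem_univ a) h)]
  rw [Finset.sum_eq_single b (fun j _ hj => by split_ifs <;> simp_all)
      (fun h => absurd (Finset.mem_univ b) h)]
  split_ifs <;> simp_all

lemma deriv_Fent (ε : ℂ) (x : Fin N → ℂ) (hx : ∀ i j : Fin N, i ≠ j → ¬ inPiZ (x i - x j))
    (ν a b : Fin N) :
    deriv (fun t : ℂ => Fent N ε (Function.update x ν t) a b) (x ν) = Gent N x ν a b := by
  by_cases hab : a = b
  · subst hab
    simp [Fent, Gent]
  · have hs : Complex.sinh (x a - x b) ≠ 0 :=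
      sinh_ne_zero_of_not_inPiZ (hx a b hab)
    simp only [Fent, Gent, ne_eq, hab, not_false_eq_true, if_true, if_neg hab]
    by_cases ha : a = ν
    · subst ha
      have hb : b ≠ a := fun h => hab h.symm
      have hfun : (fun t : ℂ => ε - coth (Function.update x a t a - Function.update x a t b))
          = fun t : ℂ => ε - coth (t - x b) := by
        funext t
        rw [Function.update_self, Function.update_of_ne hb]
      rw [hfun]
      have hd : HasDerivAt (fun t : ℂ => ε - coth (t - x b))
          (-((1 - coth (x a - x b) ^ 2) * 1)) (x a) :=
        (((hasDerivAt_coth hs).comp (x a) (h₂ := coth)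
          ((hasDerivAt_id (x a)).sub_const (x b)))).const_sub ε
      rw [hd.deriv]
      simp [hb]
    · by_cases hbv : b = ν
      · subst hbv
        have ha' : a ≠ b := hab
        have hfun : (fun t : ℂ => ε - coth (Function.update x b t a - Function.update x b t b))
            = fun t : ℂ => ε - coth (x a - t) := by
          funext t
          rw [Function.update_self, Function.update_of_ne ha']
        rw [hfun]
        have hd : HasDerivAt (fun t : ℂ => ε - coth (x a - t))
            (-((1 - coth (x a - x b) ^ 2) * (0 - 1))) (x b) :=
          (((hasDerivAt_coth hs).comp (x b) (h₂ := coth)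
            ((hasDerivAt_const (x b) (x a)).sub (hasDerivAt_id (x b))))).const_sub ε
        rw [hd.deriv]
        simp [ha]
      · have hfun : (fun t : ℂ => ε - coth (Function.update x ν t a - Function.update x ν t b))
            = fun _ : ℂ => ε - coth (x a - x b) := by
          funext t
          rw [Function.update_of_ne ha, Function.update_of_ne hbv]
        rw [hfun, deriv_const]
        simp [ha, hbv]

lemma pderiv_apply (ε : ℂ) (x : Fin N → ℂ)
    (hx : ∀ i j : Fin N, i ≠ j → ¬ inPiZ (x i - x j)) (ν a b c d : Fin N) :
    pderivMat N ν (rToda N ε) x (a, b) (c, d) =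
      if b = c ∧ a = d then Gent N x ν a b else 0 := by
  have hfun : (fun t : ℂ => rToda N ε (Function.update x ν t) (a, b) (c, d))
      = fun t : ℂ => if b = c ∧ a = d then Fent N ε (Function.update x ν t) a b else 0 := by
    funext t
    exact rToda_apply N ε (Function.update x ν t) a b c d
  show deriv _ (x ν) = _
  rw [hfun]
  by_cases h : b = c ∧ a = d
  · simp only [eq_true h, if_true]
    exact deriv_Fent N ε x hx ν a b
  · simp only [eq_false h, if_false, deriv_const]

section Products
variable (ε : ℂ) (x : Fin N → ℂ)

lemma mulE1 (a b c d e f : Fin N) :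
    (pl12 N (rToda N ε x) * pl13 N (rToda N ε x)) (a,b,c) (d,e,f) =
    if c = d ∧ a = e ∧ b = f then Fent N ε x a b * Fent N ε x b c else 0 := by
  rw [Matrix.mul_apply]
  have key : ∀ m : Fin N × Fin N × Fin N,
      pl12 N (rToda N ε x) (a,b,c) m * pl13 N (rToda N ε x) m (d,e,f) =
      if m = (b,a,c) then
        (if c = d ∧ a = e ∧ b = f then Fent N ε x a b * Fent N ε x b c else 0) else 0 := by
    rintro ⟨u,v,w⟩
    simp only [pl12, pl13, rToda_apply, Prod.mk.injEq]
    split_ifs <;> simp_all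
  rw [Finset.sum_congr rfl (fun m _ => key m)]
  simp

lemma mulE2 (a b c d e f : Fin N) :
    (pl13 N (rToda N ε x) * pl12 N (rToda N ε x)) (a,b,c) (d,e,f) =
    if b = d ∧ c = e ∧ a = f then Fent N ε x a c * Fent N ε x c b else 0 := by
  rw [Matrix.mul_apply]
  have key : ∀ m : Fin N × Fin N × Fin N,
      pl13 N (rToda N ε x) (a,b,c) m * pl12 N (rToda N ε x) m (d,e,f) =
      if m = (c,b,a) then
        (if b = d ∧ c = e ∧ a = f then Fent N ε x a c * Fent N ε x c b else 0) else 0 := by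
    rintro ⟨u,v,w⟩
    simp only [pl13, pl12, rToda_apply, Prod.mk.injEq]
    split_ifs <;> simp_all
  rw [Finset.sum_congr rfl (fun m _ => key m)]
  simp

lemma mulE3 (a b c d e f : Fin N) :
    (pl12 N (rToda N ε x) * pl23 N (rToda N ε x)) (a,b,c) (d,e,f) =
    if b = d ∧ c = e ∧ a = f then Fent N ε x a b * Fent N ε x a c else 0 := by
  rw [Matrix.mul_apply]
  have key : ∀ m : Fin N × Fin N × Fin N,
      pl12 N (rToda N ε x) (a,b,c) m * pl23 N (rToda N ε x) m (d,e,f) =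
      if m = (b,a,c) then
        (if b = d ∧ c = e ∧ a = f then Fent N ε x a b * Fent N ε x a c else 0) else 0 := by
    rintro ⟨u,v,w⟩
    simp only [pl12, pl23, rToda_apply, Prod.mk.injEq]
    split_ifs <;> simp_all
  rw [Finset.sum_congr rfl (fun m _ => key m)]
  simp

lemma mulE4 (a b c d e f : Fin N) :
    (pl23 N (rToda N ε x) * pl12 N (rToda N ε x)) (a,b,c) (d,e,f) =
    if c = d ∧ a = e ∧ b = f then Fent N ε x b c * Fent N ε x a c else 0 := by
  rw [Matrix.mul_apply]
  have key : ∀ m : Fin N × Fin N × Fin N,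
      pl23 N (rToda N ε x) (a,b,c) m * pl12 N (rToda N ε x) m (d,e,f) =
      if m = (a,c,b) then
        (if c = d ∧ a = e ∧ b = f then Fent N ε x b c * Fent N ε x a c else 0) else 0 := by
    rintro ⟨u,v,w⟩
    simp only [pl23, pl12, rToda_apply, Prod.mk.injEq]
    split_ifs <;> simp_all
  rw [Finset.sum_congr rfl (fun m _ => key m)]
  simp

lemma mulE5 (a b c d e f : Fin N) :
    (pl13 N (rToda N ε x) * pl23 N (rToda N ε x)) (a,b,c) (d,e,f) =
    if c = d ∧ a = e ∧ b = f then Fent N ε x a c * Fent N ε x b a else 0 := by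
  rw [Matrix.mul_apply]
  have key : ∀ m : Fin N × Fin N × Fin N,
      pl13 N (rToda N ε x) (a,b,c) m * pl23 N (rToda N ε x) m (d,e,f) =
      if m = (c,b,a) then
        (if c = d ∧ a = e ∧ b = f then Fent N ε x a c * Fent N ε x b a else 0) else 0 := by
    rintro ⟨u,v,w⟩
    simp only [pl13, pl23, rToda_apply, Prod.mk.injEq]
    split_ifs <;> simp_all
  rw [Finset.sum_congr rfl (fun m _ => key m)]
  simp

lemma mulE6 (a b c d e f : Fin N) :
    (pl23 N (rToda N ε x) * pl13 N (rToda N ε x)) (a,b,c) (d,e,f) =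
    if b = d ∧ c = e ∧ a = f then Fent N ε x b c * Fent N ε x a b else 0 := by
  rw [Matrix.mul_apply]
  have key : ∀ m : Fin N × Fin N × Fin N,
      pl23 N (rToda N ε x) (a,b,c) m * pl13 N (rToda N ε x) m (d,e,f) =
      if m = (a,c,b) then
        (if b = d ∧ c = e ∧ a = f then Fent N ε x b c * Fent N ε x a b else 0) else 0 := by
    rintro ⟨u,v,w⟩
    simp only [pl23, pl13, rToda_apply, Prod.mk.injEq]
    split_ifs <;> simp_all
  rw [Finset.sum_congr rfl (fun m _ => key m)]
  simp

lemma derE1 (hx : ∀ i j : Fin N, i ≠ j → ¬ inPiZ (x i - x j)) (a b c d e f : Fin N) :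
    (∑ ν : Fin N, pl1 N (E N ν ν) * pl23 N (pderivMat N ν (rToda N ε) x)) (a,b,c) (d,e,f) =
    if a = d ∧ c = e ∧ b = f then Gent N x a b c else 0 := by
  rw [Matrix.sum_apply]
  have h1 : ∀ ν : Fin N,
      (pl1 N (E N ν ν) * pl23 N (pderivMat N ν (rToda N ε) x)) (a,b,c) (d,e,f)
      = if ν = a then (if a = d ∧ c = e ∧ b = f then Gent N x a b c else 0) else 0 := by
    intro ν
    rw [Matrix.mul_apply]
    have key : ∀ m : Fin N × Fin N × Fin N,
        pl1 N (E N ν ν) (a,b,c) m * pl23 N (pderivMat N ν (rToda N ε) x) m (d,e,f) =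
        if m = (a,b,c) then (if ν = a then (if a = d ∧ c = e ∧ b = f then Gent N x a b c else 0) else 0) else 0 := by
      rintro ⟨u,v,w⟩
      simp only [pl1, pl23, E, Matrix.single, Matrix.of_apply,
        pderiv_apply N ε x hx, Prod.mk.injEq]
      split_ifs <;> simp_all <;> simp_all [eq_comm]
    rw [Finset.sum_congr rfl (fun m _ => key m)]
    simp
  rw [Finset.sum_congr rfl (fun ν _ => h1 ν)]
  simp

lemma derE2 (hx : ∀ i j : Fin N, i ≠ j → ¬ inPiZ (x i - x j)) (a b c d e f : Fin N) :
    (∑ ν : Fin N, pl2 N (E N ν ν) * pl13 N (pderivMat N ν (rToda N ε) x)) (a,b,c) (d,e,f) =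
    if c = d ∧ b = e ∧ a = f then Gent N x b a c else 0 := by
  rw [Matrix.sum_apply]
  have h1 : ∀ ν : Fin N,
      (pl2 N (E N ν ν) * pl13 N (pderivMat N ν (rToda N ε) x)) (a,b,c) (d,e,f)
      = if ν = b then (if c = d ∧ b = e ∧ a = f then Gent N x b a c else 0) else 0 := by
    intro ν
    rw [Matrix.mul_apply]
    have key : ∀ m : Fin N × Fin N × Fin N,
        pl2 N (E N ν ν) (a,b,c) m * pl13 N (pderivMat N ν (rToda N ε) x) m (d,e,f) =
        if m = (a,b,c) then (if ν = b then (if c = d ∧ b = e ∧ a = f then Gent N x b a c else 0) else 0) else 0 := by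
      rintro ⟨u,v,w⟩
      simp only [pl2, pl13, E, Matrix.single, Matrix.of_apply,
        pderiv_apply N ε x hx, Prod.mk.injEq]
      split_ifs <;> simp_all <;> simp_all [eq_comm]
    rw [Finset.sum_congr rfl (fun m _ => key m)]
    simp
  rw [Finset.sum_congr rfl (fun ν _ => h1 ν)]
  simp

lemma derE3 (hx : ∀ i j : Fin N, i ≠ j → ¬ inPiZ (x i - x j)) (a b c d e f : Fin N) :
    (∑ ν : Fin N, pl3 N (E N ν ν) * pl12 N (pderivMat N ν (rToda N ε) x)) (a,b,c) (d,e,f) =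
    if b = d ∧ a = e ∧ c = f then Gent N x c a b else 0 := by
  rw [Matrix.sum_apply]
  have h1 : ∀ ν : Fin N,
      (pl3 N (E N ν ν) * pl12 N (pderivMat N ν (rToda N ε) x)) (a,b,c) (d,e,f)
      = if ν = c then (if b = d ∧ a = e ∧ c = f then Gent N x c a b else 0) else 0 := by
    intro ν
    rw [Matrix.mul_apply]
    have key : ∀ m : Fin N × Fin N × Fin N,
        pl3 N (E N ν ν) (a,b,c) m * pl12 N (pderivMat N ν (rToda N ε) x) m (d,e,f) =
        if m = (a,b,c) then (if ν = c then (if b = d ∧ a = e ∧ c = f then Gent N x c a b else 0) else 0) else 0 := by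
      rintro ⟨u,v,w⟩
      simp only [pl3, pl12, E, Matrix.single, Matrix.of_apply,
        pderiv_apply N ε x hx, Prod.mk.injEq]
      split_ifs <;> simp_all <;> simp_all [eq_comm]
    rw [Finset.sum_congr rfl (fun m _ => key m)]
    simp
  rw [Finset.sum_congr rfl (fun ν _ => h1 ν)]
  simp

end Products

lemma combine (P Q R S T : Prop) [Decidable P] [Decidable Q] [Decidable R] [Decidable S]
    [Decidable T] (F1 F2 F3 F4 F5 F6 G1 G2 G3 : ℂ) :
    ((if P then F1 else 0) - (if Q then F2 else 0)) +
    ((if Q then F3 else 0) - (if P then F4 else 0)) +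
    ((if P then F5 else 0) - (if Q then F6 else 0)) -
    (if R then G1 else 0) + (if S then G2 else 0) - (if T then G3 else 0) =
    (if P then 1 else 0) * (F1 - F4 + F5) + (if Q then 1 else 0) * (F3 - F2 - F6) -
    (if R then 1 else 0) * G1 + (if S then 1 else 0) * G2 - (if T then 1 else 0) * G3 := by
  split_ifs <;> ring

theorem rToda_generalized_CYBE (hN : 2 ≤ N) (ε : ℂ) (hε : ε = 1 ∨ ε = -1)
    (x : Fin N → ℂ) (hx : ∀ i j : Fin N, i ≠ j → ¬ inPiZ (x i - x j)) :
    mcomm (pl12 N (rToda N ε x)) (pl13 N (rToda N ε x)) +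
    mcomm (pl12 N (rToda N ε x)) (pl23 N (rToda N ε x)) +
    mcomm (pl13 N (rToda N ε x)) (pl23 N (rToda N ε x)) -
    (∑ ν : Fin N, pl1 N (E N ν ν) * pl23 N (pderivMat N ν (rToda N ε) x)) +
    (∑ ν : Fin N, pl2 N (E N ν ν) * pl13 N (pderivMat N ν (rToda N ε) x)) -
    (∑ ν : Fin N, pl3 N (E N ν ν) * pl12 N (pderivMat N ν (rToda N ε) x)) = 0 := by
  have hε2 : ε ^ 2 = 1 := by rcases hε with h | h <;> rw [h] <;> ring
  ext ⟨a, b, c⟩ ⟨d, e, f⟩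
  simp only [mcomm, Matrix.sub_apply, Matrix.add_apply, Matrix.zero_apply]
  rw [mulE1 N ε x a b c d e f, mulE2 N ε x a b c d e f, mulE3 N ε x a b c d e f,
    mulE4 N ε x a b c d e f, mulE5 N ε x a b c d e f, mulE6 N ε x a b c d e f,
    derE1 N ε x hx a b c d e f, derE2 N ε x hx a b c d e f, derE3 N ε x hx a b c d e f]
  rw [combine]
  by_cases hab : a = b
  · obtain rfl := hab
    by_cases hbc : a = c
    · -- a = b = c
      obtain rfl := hbc
      have hFaa : Fent N ε x a a = ε := by simp [Fent]
      have hG : Gent N x a a a = 0 := by simp [Gent]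
      rw [hFaa, hG]
      split_ifs <;> ring
    · -- a = b ≠ c
      have hca : ¬ c = a := fun h => hbc h.symm
      have hFaa : Fent N ε x a a = ε := by simp [Fent]
      have hFac : Fent N ε x a c = ε - coth (x a - x c) := by simp [Fent, hbc]
      have hFca : Fent N ε x c a = ε + coth (x a - x c) := by
        simp only [Fent, ne_eq, hca, not_false_eq_true, if_true]
        rw [show x c - x a = -(x a - x c) by ring, coth_neg']
        ring
      have hG12 : Gent N x a a c = coth (x a - x c) ^ 2 - 1 := by
        simp [Gent, hbc, hca]
      have hG3 : Gent N x c a a = 0 := by simp [Gent]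
      rw [hFaa, hFac, hFca, hG12, hG3]
      split_ifs <;> first | ring1 | linear_combination hε2 | linear_combination -hε2
  · by_cases hbc : b = c
    · -- b = c ≠ a
      obtain rfl := hbc
      have hba : ¬ b = a := fun h => hab h.symm
      have hFbb : Fent N ε x b b = ε := by simp [Fent]
      have hFab : Fent N ε x a b = ε - coth (x a - x b) := by simp [Fent, hab]
      have hFba : Fent N ε x b a = ε + coth (x a - x b) := by
        simp only [Fent, ne_eq, hba, not_false_eq_true, if_true]
        rw [show x b - x a = -(x a - x b) by ring, coth_neg']
        ring
      have hG1 : Gent N x a b b = 0 := by simp [Gent]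
      have hG23 : Gent N x b a b = 1 - coth (x a - x b) ^ 2 := by
        simp [Gent, hab]
        try ring
      rw [hFbb, hFab, hFba, hG1, hG23]
      split_ifs <;> first | ring1 | linear_combination hε2 | linear_combination -hε2
    · by_cases hac : a = c
      · -- a = c ≠ b
        obtain rfl := hac
        have hba : ¬ b = a := fun h => hab h.symm
        have hFaa : Fent N ε x a a = ε := by simp [Fent]
        have hFab : Fent N ε x a b = ε - coth (x a - x b) := by simp [Fent, hab]
        have hFba : Fent N ε x b a = ε + coth (x a - x b) := by
          simp only [Fent, ne_eq, hba, not_false_eq_true, if_true]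
          rw [show x b - x a = -(x a - x b) by ring, coth_neg']
          ring
        have hG1 : Gent N x a b a = 1 - coth (x a - x b) ^ 2 := by
          simp [Gent, hba]
          rw [show x b - x a = -(x a - x b) by ring, coth_neg']
          ring
        have hG2 : Gent N x b a a = 0 := by simp [Gent]
        have hG3 : Gent N x a a b = coth (x a - x b) ^ 2 - 1 := by
          simp [Gent, hab, hba]
        rw [hFaa, hFab, hFba, hG1, hG2, hG3]
        split_ifs <;> first | ring1 | linear_combination hε2 | linear_combination -hε2
      · -- all distinct
        have hba : ¬ b = a := fun h => hab h.symm
        have hca : ¬ c = a := fun h => hac h.symm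
        have hcb : ¬ c = b := fun h => hbc h.symm
        have s1 := sinh_ne_zero_of_not_inPiZ (hx a b hab)
        have s2 := sinh_ne_zero_of_not_inPiZ (hx b c hbc)
        have s3 := sinh_ne_zero_of_not_inPiZ (hx a c hac)
        have hkey : coth (x a - x b) * coth (x b - x c) + 1 =
            coth (x a - x c) * (coth (x a - x b) + coth (x b - x c)) := by
          have h3 : x a - x b + (x b - x c) = x a - x c := by ring
          have h := coth_add_identity s1 s2 (by rw [h3]; exact s3)
          rwa [h3] at h
        have hFab : Fent N ε x a b = ε - coth (x a - x b) := by simp [Fent, hab]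
        have hFbc : Fent N ε x b c = ε - coth (x b - x c) := by simp [Fent, hbc]
        have hFac : Fent N ε x a c = ε - coth (x a - x c) := by simp [Fent, hac]
        have hFba : Fent N ε x b a = ε + coth (x a - x b) := by
          simp only [Fent, ne_eq, hba, not_false_eq_true, if_true]
          rw [show x b - x a = -(x a - x b) by ring, coth_neg']
          ring
        have hFcb : Fent N ε x c b = ε + coth (x b - x c) := by
          simp only [Fent, ne_eq, hcb, not_false_eq_true, if_true]
          rw [show x c - x b = -(x b - x c) by ring, coth_neg']
          ring
        have hG1 : Gent N x a b c = 0 := by simp [Gent, hbc, hba, hca]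
        have hG2 : Gent N x b a c = 0 := by simp [Gent, hac, hab, hcb]
        have hG3 : Gent N x c a b = 0 := by simp [Gent, hab, hac, hbc]
        rw [hFab, hFbc, hFac, hFba, hFcb, hG1, hG2, hG3]
        split_ifs <;>
          first
            | ring1
            | linear_combination hε2 + hkey
            | linear_combination -hε2 - hkey
            | linear_combination hε2
            | linear_combination -hε2
            | linear_combination hkey
            | linear_combination -hkey
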